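/- For every δ > 0 there exist a number of agents n, a number of chores m, and monotone normalized cost functions c_1,…,c_n : 2^[m] → ℝ≥0 such that every MMS multi-allocation A of this instance leaves at least (1−δ)·m/e chores unassigned, i.e., ‖χ^A‖_z ≥ (1−δ)·m/e (where e is Euler's number). -/

import Mathlib

open Finset

/-- `X : Fin n → Finset α` is a partition of the (finite) ground set `α` into `n`
(possibly empty) pairwise disjoint parts whose union is everything. -/
def IsPartition {α : Type*} [DecidableEq α] [Fintype α] {n : ℕ}
    (X : Fin n → Finset α) : Prop :=
  (∀ i j : Fin n, i ≠ j → Disjoint (X i) (X j)) ∧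
    Finset.univ.biUnion X = Finset.univ

/-- Chores maximin share: min over partitions of the max cost of a part. -/
noncomputable def mmsCost {m : ℕ} (n : ℕ) (c : Finset (Fin m) → NNReal) : NNReal :=
  sInf {x : NNReal | ∃ X : Fin n → Finset (Fin m), IsPartition X ∧ x = ⨆ j, c (X j)}

/-- Choice of a large enough `n`. -/
lemma exists_good_n (δ : ℝ) (hδ : 0 < δ) :
    ∃ n : ℕ, 2 ≤ n ∧ (1 - δ) / Real.exp 1 * (n : ℝ) ^ n ≤ ((n : ℝ) - 1) ^ n := by
  have hlim := Real.tendsto_one_add_div_pow_exp (-1)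
  have hlt : (1 - δ) / Real.exp 1 < Real.exp (-1) := by
    rw [Real.exp_neg, ← one_div, div_lt_div_iff₀ (Real.exp_pos 1) (Real.exp_pos 1)]
    nlinarith [Real.exp_pos 1]
  have h1 : ∀ᶠ n : ℕ in Filter.atTop,
      (1 - δ) / Real.exp 1 < (1 + (-1) / (n : ℝ)) ^ n :=
    hlim.eventually (eventually_gt_nhds hlt)
  obtain ⟨n, hn1, hn2⟩ := (h1.and (Filter.eventually_ge_atTop 2)).exists
  refine ⟨n, hn2, ?_⟩
  have hn0 : (0 : ℝ) < (n : ℝ) := by positivity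
  have heq : (1 + (-1) / (n : ℝ)) = ((n : ℝ) - 1) / n := by
    field_simp
    ring
  rw [heq, div_pow] at hn1
  have hnpow : (0 : ℝ) < (n : ℝ) ^ n := by positivity
  calc (1 - δ) / Real.exp 1 * (n : ℝ) ^ n
      ≤ ((n : ℝ) - 1) ^ n / (n : ℝ) ^ n * (n : ℝ) ^ n := by
        apply mul_le_mul_of_nonneg_right hn1.le hnpow.le
    _ = ((n : ℝ) - 1) ^ n := by field_simp

theorem mms_chores_lower_bound (δ : ℝ) (hδ : 0 < δ) :
    ∃ (n m : ℕ) (c : Fin n → Finset (Fin m) → NNReal),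
      0 < n ∧ 0 < m ∧
      (∀ i, ∀ S T : Finset (Fin m), S ⊆ T → c i S ≤ c i T) ∧
      (∀ i, c i ∅ = 0) ∧
      ∀ A : Fin n → Finset (Fin m),
        (∀ i, c i (A i) ≤ mmsCost n (c i)) →
        (1 - δ) * m / Real.exp 1
          ≤ ((Finset.univ.filter (fun a : Fin m => ∀ i, a ∉ A i)).card : ℝ) := by
  obtain ⟨n, hn2, hbound⟩ := exists_good_n δ hδ
  have hn0 : 0 < n := by omega
  haveI : NeZero n := ⟨hn0.ne'⟩
  set m := n ^ n with hm
  have hm0 : 0 < m := Nat.pow_pos hn0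
  -- the equivalence between chores and functions
  let e : Fin m ≃ (Fin n → Fin n) := finFunctionFinEquiv.symm
  classical
  -- cost functions
  let c : Fin n → Finset (Fin m) → NNReal := fun i S =>
    if ∃ j : Fin n, ∀ a ∈ S, e a i = j then 0 else 1
  have hc : ∀ i S, c i S = if ∃ j : Fin n, ∀ a ∈ S, e a i = j then 0 else 1 :=
    fun _ _ => rfl
  refine ⟨n, m, c, hn0, hm0, ?_, ?_, ?_⟩
  · -- monotone
    intro i S T hST
    rw [hc, hc]
    by_cases hT : ∃ j : Fin n, ∀ a ∈ T, e a i = j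
    · obtain ⟨j, hj⟩ := hT
      have hS : ∃ j : Fin n, ∀ a ∈ S, e a i = j := ⟨j, fun a ha => hj a (hST ha)⟩
      rw [if_pos hS, if_pos ⟨j, hj⟩]
    · rw [if_neg hT]
      split <;> simp
  · -- normalized
    intro i
    have h0 : ∃ j : Fin n, ∀ a ∈ (∅ : Finset (Fin m)), e a i = j :=
      ⟨⟨0, hn0⟩, fun a ha => absurd ha (Finset.notMem_empty a)⟩
    rw [hc, if_pos h0]
  · intro A hA
    -- mmsCost is 0 for every agent
    have hmms : ∀ i, mmsCost n (c i) = 0 := by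
      intro i
      refine le_antisymm (csInf_le' ?_) (zero_le)
      show ∃ X : Fin n → Finset (Fin m), IsPartition X ∧ (0 : NNReal) = ⨆ j, c i (X j)
      refine ⟨fun j => Finset.univ.filter (fun a => e a i = j), ⟨?_, ?_⟩, ?_⟩
      · intro j j' hjj'
        simp only [Finset.disjoint_left, Finset.mem_filter]
        rintro a ⟨-, h1⟩ ⟨-, h2⟩
        exact hjj' (h1 ▸ h2 ▸ rfl)
      · apply Finset.eq_univ_of_forall
        intro a
        exact Finset.mem_biUnion.mpr
          ⟨e a i, Finset.mem_univ _, Finset.mem_filter.mpr ⟨Finset.mem_univ _, rfl⟩⟩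
      · have hz : ∀ j : Fin n, c i (Finset.univ.filter (fun a => e a i = j)) = 0 := by
          intro j
          have hw : ∃ j' : Fin n, ∀ a ∈ Finset.univ.filter (fun a => e a i = j),
              e a i = j' := ⟨j, fun a ha => (Finset.mem_filter.mp ha).2⟩
          rw [hc, if_pos hw]
        simp only [hz]
        exact (ciSup_const).symm
    -- each bundle is inside a block
    have hblock : ∀ i, ∃ j : Fin n, ∀ a ∈ A i, e a i = j := by
      intro i
      by_contra hcon
      have h1 := hA i
      rw [hmms i, hc, if_neg hcon] at h1
      exact absurd (le_antisymm h1 (zero_le)) one_ne_zero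
    choose j hj using hblock
    -- the set of surely-unassigned chores
    set F : Finset (Fin m) :=
      (Fintype.piFinset (fun i => (Finset.univ : Finset (Fin n)).erase (j i))).map
        e.symm.toEmbedding with hF
    have hsub : F ⊆ Finset.univ.filter (fun a : Fin m => ∀ i, a ∉ A i) := by
      intro a ha
      rw [hF, Finset.mem_map_equiv] at ha
      simp only [Equiv.symm_symm, Fintype.mem_piFinset, Finset.mem_erase,
        Finset.mem_univ, and_true] at ha
      simp only [Finset.mem_filter, Finset.mem_univ, true_and]
      intro i hai
      exact ha i (hj i a hai)
    have hcard : F.card = (n - 1) ^ n := by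
      rw [hF, Finset.card_map, Fintype.card_piFinset]
      simp [Finset.card_erase_of_mem, Finset.card_univ]
    have hle : (n - 1) ^ n ≤
        (Finset.univ.filter (fun a : Fin m => ∀ i, a ∉ A i)).card := by
      rw [← hcard]; exact Finset.card_le_card hsub
    have hcast : (((n - 1 : ℕ)) : ℝ) = (n : ℝ) - 1 := by
      have h1 : (1 : ℕ) ≤ n := hn0
      push_cast [h1]
      ring
    calc (1 - δ) * (m : ℝ) / Real.exp 1
        = (1 - δ) / Real.exp 1 * (n : ℝ) ^ n := by
          rw [hm]; push_cast; ring
      _ ≤ ((n : ℝ) - 1) ^ n := hbound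
      _ = (((n - 1 : ℕ)) : ℝ) ^ n := by rw [hcast]
      _ = (((n - 1) ^ n : ℕ) : ℝ) := by push_cast; ring
      _ ≤ _ := by exact_mod_cast hle
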